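/- Let m, n be nonnegative integers, let T > 0, let a₁, …, a_n ∈ [0,T] be distinct, and let f : [0,T] → ℝ be (m+n)-times continuously differentiable with f(a_i) = 0 for i = 1,…,n. Then there exists an m-times continuously differentiable function ζ : [0,T] → ℝ such that f(t) = ζ(t)·∏_{i=1}^n (t − a_i) for all t ∈ [0,T]. -/

import Mathlib

open Set Filter Polynomial intervalIntegral MeasureTheory BigOperators

lemma polyEval_contDiff (p : ℝ[X]) (n : ℕ) : ContDiff ℝ (n : ℕ) (fun x => p.eval x) := by
  induction n generalizing p with
  | zero => exact contDiff_zero.2 p.continuous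
  | succ n ih =>
    rw [show ((n+1 : ℕ) : WithTop ℕ∞) = (n : ℕ) + 1 by push_cast; ring]
    rw [contDiff_succ_iff_deriv]
    refine ⟨p.differentiable, by simp, ?_⟩
    have : deriv (fun x => p.eval x) = fun x => p.derivative.eval x := by
      funext x; exact p.deriv
    rw [this]; exact ih _

lemma iteratedDeriv_polyEval (p : ℝ[X]) (j : ℕ) :
    iteratedDeriv j (fun x => p.eval x) = fun x => (Polynomial.derivative^[j] p).eval x := by
  induction j with
  | zero => simp [iteratedDeriv_zero]
  | succ j ih =>
    rw [iteratedDeriv_succ, ih, Function.iterate_succ_apply']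
    funext x; exact (Polynomial.derivative^[j] p).deriv

lemma iteratedDerivWithin_eq_iteratedDeriv_of_contDiff {g : ℝ → ℝ}
    (hg : ∀ k : ℕ, ContDiff ℝ (k : ℕ) g) (j : ℕ) {s : Set ℝ} (hs : UniqueDiffOn ℝ s) :
    Set.EqOn (iteratedDerivWithin j g s) (iteratedDeriv j g) s := by
  induction j with
  | zero => intro x hx; simp [iteratedDerivWithin_zero, iteratedDeriv_zero]
  | succ j ih =>
    intro x hx
    rw [iteratedDerivWithin_succ, iteratedDeriv_succ]
    rw [derivWithin_congr ih (ih hx)]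
    exact DifferentiableAt.derivWithin
      (((hg (j+1)).differentiable_iteratedDeriv j (by exact_mod_cast Nat.lt_succ_self j)).differentiableAt)
      (hs x hx)

lemma glueGen (k : ℕ) :
    ∀ (c : ℝ) (S S₁ S₂ : Set ℝ) (g₁ g₂ : ℝ → ℝ),
    c ∈ S → S = S₁ ∪ S₂ → S ∩ Iic c = S₁ → S ∩ Ici c = S₂ →
    UniqueDiffOn ℝ S → UniqueDiffOn ℝ S₁ → UniqueDiffOn ℝ S₂ →
    ContDiffOn ℝ (k : ℕ) g₁ S₁ → ContDiffOn ℝ (k : ℕ) g₂ S₂ →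
    (∀ j ≤ k, iteratedDerivWithin j g₁ S₁ c = iteratedDerivWithin j g₂ S₂ c) →
    ContDiffOn ℝ (k : ℕ) (fun t => if t ≤ c then g₁ t else g₂ t) S := by
  induction k with
  | zero =>
    intro c S S₁ S₂ g₁ g₂ hcS hSU h1 h2 uS u1 u2 hg1 hg2 hj
    rw [show ((0:ℕ) : WithTop ℕ∞) = 0 from rfl, contDiffOn_zero] at *
    apply ContinuousOn.if
    · intro a ⟨_, haf⟩
      have : frontier {a : ℝ | a ≤ c} = {c} := by
        have : {a : ℝ | a ≤ c} = Iic c := rfl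
        rw [this, frontier_Iic]
      rw [this] at haf
      rcases haf with rfl
      have := hj 0 le_rfl
      simpa [iteratedDerivWithin_zero] using this
    · have : closure {a : ℝ | a ≤ c} = Iic c := by
        rw [show {a : ℝ | a ≤ c} = Iic c from rfl, closure_Iic]
      rw [this, h1]; exact hg1
    · have : closure {a : ℝ | ¬ a ≤ c} = Ici c := by
        have : {a : ℝ | ¬ a ≤ c} = Ioi c := by ext x; simp [not_le]
        rw [this, closure_Ioi]
      rw [this, h2]; exact hg2
  | succ k IH =>
    intro c S S₁ S₂ g₁ g₂ hcS hSU h1 h2 uS u1 u2 hg1 hg2 hj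
    have hc1 : c ∈ S₁ := by rw [← h1]; exact ⟨hcS, self_mem_Iic⟩
    have hc2 : c ∈ S₂ := by rw [← h2]; exact ⟨hcS, self_mem_Ici⟩
    set E : ℝ → ℝ := fun t => if t ≤ c then g₁ t else g₂ t with hE
    have hE1 : EqOn E g₁ S₁ := by
      intro x hx
      have : x ≤ c := by rw [← h1] at hx; exact hx.2
      simp [hE, this]
    have hE2 : EqOn E g₂ S₂ := by
      intro x hx
      have hxc : c ≤ x := by rw [← h2] at hx; exact hx.2
      rcases eq_or_lt_of_le hxc with rfl | hlt
      · have h0 := hj 0 (Nat.zero_le _)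
        simpa [iteratedDerivWithin_zero, hE] using h0
      · simp [hE, not_le.2 hlt]
    -- set equality facts
    have hS_lt : ∀ t, t < c → S =ᶠ[nhds t] S₁ := by
      intro t htc
      filter_upwards [Iio_mem_nhds htc] with x hx
      have : (x ∈ S) = (x ∈ S₁) := by
        simp only [eq_iff_iff, ← h1]
        exact ⟨fun h => ⟨h, (Set.mem_Iio.1 hx).le⟩, fun h => h.1⟩
      exact this
    have hS_gt : ∀ t, c < t → S =ᶠ[nhds t] S₂ := by
      intro t htc
      filter_upwards [Ioi_mem_nhds htc] with x hx
      have : (x ∈ S) = (x ∈ S₂) := by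
        simp only [eq_iff_iff, ← h2]
        exact ⟨fun h => ⟨h, (Set.mem_Ioi.1 hx).le⟩, fun h => h.1⟩
      exact this
    have hEg1 : ∀ t, t < c → E =ᶠ[nhds t] g₁ := by
      intro t htc
      filter_upwards [Iio_mem_nhds htc] with x hx
      simp [hE, (Set.mem_Iio.1 hx).le]
    have hEg2 : ∀ t, c < t → E =ᶠ[nhds t] g₂ := by
      intro t htc
      filter_upwards [Ioi_mem_nhds htc] with x hx
      simp [hE, not_le.2 (Set.mem_Ioi.1 hx)]
    have hone : ((k+1:ℕ) : WithTop ℕ∞) ≠ 0 := by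
      exact_mod_cast Nat.succ_ne_zero k
    -- derivative at c
    have hdc : HasDerivWithinAt E (derivWithin g₁ S₁ c) S c := by
      have hd1 : HasDerivWithinAt g₁ (derivWithin g₁ S₁ c) S₁ c :=
        (((hg1.differentiableOn hone) c hc1).hasDerivWithinAt)
      have hd2' : HasDerivWithinAt g₂ (derivWithin g₂ S₂ c) S₂ c :=
        (((hg2.differentiableOn hone) c hc2).hasDerivWithinAt)
      have heq : derivWithin g₂ S₂ c = derivWithin g₁ S₁ c := by
        have := hj 1 (Nat.one_le_iff_ne_zero.2 (Nat.succ_ne_zero k))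
        rw [iteratedDerivWithin_one, iteratedDerivWithin_one] at this
        exact this.symm
      have e1 : HasDerivWithinAt E (derivWithin g₁ S₁ c) S₁ c :=
        hd1.congr hE1 (hE1 hc1)
      have e2 : HasDerivWithinAt E (derivWithin g₁ S₁ c) S₂ c := by
        rw [← heq]; exact hd2'.congr hE2 (hE2 hc2)
      rw [hSU]; exact e1.union e2
    -- differentiability on S
    have hdiff : DifferentiableOn ℝ E S := by
      intro t ht
      rcases lt_trichotomy t c with htc | rfl | htc
      · have hd : DifferentiableWithinAt ℝ g₁ S₁ t :=
          (hg1.differentiableOn hone) t (by rw [← h1]; exact ⟨ht, le_of_lt htc⟩)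
        have : DifferentiableWithinAt ℝ g₁ S t := by
          rw [differentiableWithinAt_congr_set (hS_lt t htc)]
          exact hd
        exact this.congr_of_eventuallyEq
          ((hEg1 t htc).filter_mono nhdsWithin_le_nhds) (by simp [hE, le_of_lt htc])
      · exact hdc.differentiableWithinAt
      · have hd : DifferentiableWithinAt ℝ g₂ S₂ t :=
          (hg2.differentiableOn hone) t (by rw [← h2]; exact ⟨ht, le_of_lt htc⟩)
        have : DifferentiableWithinAt ℝ g₂ S t := by
          rw [differentiableWithinAt_congr_set (hS_gt t htc)]
          exact hd
        exact this.congr_of_eventuallyEq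
          ((hEg2 t htc).filter_mono nhdsWithin_le_nhds) (by simp [hE, not_le.2 htc])
    -- derivWithin equals glue of derivatives on S
    have hderiv_eq : ∀ t ∈ S, derivWithin E S t =
        (fun t => if t ≤ c then derivWithin g₁ S₁ t else derivWithin g₂ S₂ t) t := by
      intro t ht
      rcases lt_trichotomy t c with htc | rfl | htc
      · have e1 : derivWithin E S t = derivWithin g₁ S t :=
          Filter.EventuallyEq.derivWithin_eq ((hEg1 t htc).filter_mono nhdsWithin_le_nhds)
            (by simp [hE, le_of_lt htc])
        rw [e1, derivWithin_congr_set (hS_lt t htc)]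
        simp [le_of_lt htc]
      · have := hdc.derivWithin (uS _ ht)
        rw [this]; simp
      · have e2 : derivWithin E S t = derivWithin g₂ S t :=
          Filter.EventuallyEq.derivWithin_eq ((hEg2 t htc).filter_mono nhdsWithin_le_nhds)
            (by simp [hE, not_le.2 htc])
        rw [e2, derivWithin_congr_set (hS_gt t htc)]
        simp [not_le.2 htc]
    -- apply IH
    have hIH : ContDiffOn ℝ (k : ℕ)
        (fun t => if t ≤ c then derivWithin g₁ S₁ t else derivWithin g₂ S₂ t) S := by
      apply IH c S S₁ S₂ _ _ hcS hSU h1 h2 uS u1 u2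
      · exact hg1.derivWithin u1 (by exact_mod_cast Nat.le_refl (k+1))
      · exact hg2.derivWithin u2 (by exact_mod_cast Nat.le_refl (k+1))
      · intro j hjk
        have := hj (j+1) (Nat.succ_le_succ hjk)
        rwa [iteratedDerivWithin_succ', iteratedDerivWithin_succ'] at this
    rw [show ((k+1:ℕ) : WithTop ℕ∞) = (k:ℕ) + 1 by push_cast; ring]
    rw [contDiffOn_succ_iff_derivWithin uS]
    exact ⟨hdiff, by simp, hIH.congr (fun t ht => (hderiv_eq t ht))⟩

lemma polyTaylor (d : ℕ → ℝ) (k : ℕ) (a : ℝ) :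
    ∃ P : ℝ → ℝ, (∀ n : ℕ, ContDiff ℝ (n : ℕ) P) ∧ (∀ j ≤ k, iteratedDeriv j P a = d j) := by
  set p : ℝ[X] := ∑ j ∈ Finset.range (k+1), Polynomial.C (d j / j.factorial) * X ^ j with hp
  have hcoeff : ∀ j ≤ k, p.coeff j = d j / j.factorial := by
    intro j hj
    rw [hp, Polynomial.finset_sum_coeff]
    rw [Finset.sum_eq_single j]
    · simp
    · intro b _ hbj
      simp [Polynomial.coeff_C_mul, Polynomial.coeff_X_pow, Ne.symm hbj]
    · intro h
      exact absurd (Finset.mem_range.2 (Nat.lt_succ_of_le hj)) h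
  refine ⟨fun t => p.eval (t + (-a)), ?_, ?_⟩
  · intro n
    exact (polyEval_contDiff p n).comp (contDiff_id.add contDiff_const)
  · intro j hj
    have h1 : iteratedDeriv j (fun t => p.eval (t + (-a))) a
        = iteratedDeriv j (fun x => p.eval x) (a + (-a)) :=
      congrFun (iteratedDeriv_comp_add_const j (fun x => p.eval x) (-a)) a
    rw [h1, add_neg_cancel, iteratedDeriv_polyEval]
    show ((Polynomial.derivative)^[j] p).eval 0 = d j
    rw [← Polynomial.coeff_zero_eq_eval_zero, Polynomial.coeff_iterate_derivative]
    simp only [Nat.zero_add, Nat.descFactorial_self, hcoeff j hj, nsmul_eq_mul]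
    field_simp

lemma iteratedDerivWithin_congr_set' {f : ℝ → ℝ} {s t : Set ℝ} {x : ℝ} (h : s =ᶠ[nhds x] t)
    (n : ℕ) : iteratedDerivWithin n f s x = iteratedDerivWithin n f t x := by
  simp only [iteratedDerivWithin_eq_iteratedFDerivWithin, iteratedFDerivWithin_congr_set h n]

lemma extension {k : ℕ} {T : ℝ} (hT : 0 < T) {f : ℝ → ℝ}
    (hf : ContDiffOn ℝ (k : ℕ) f (Icc 0 T)) :
    ∃ F : ℝ → ℝ, ContDiff ℝ (k : ℕ) F ∧ EqOn F f (Icc 0 T) := by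
  have uIcc : UniqueDiffOn ℝ (Icc (0:ℝ) T) := uniqueDiffOn_Icc hT
  obtain ⟨P₀, hP₀s, hP₀d⟩ := polyTaylor (fun j => iteratedDerivWithin j f (Icc 0 T) 0) k 0
  obtain ⟨PT, hPTs, hPTd⟩ := polyTaylor (fun j => iteratedDerivWithin j f (Icc 0 T) T) k T
  set f₁ : ℝ → ℝ := fun t => if t ≤ 0 then P₀ t else f t with hf₁
  have h0T : (0:ℝ) ∈ Icc (0:ℝ) T := ⟨le_refl _, hT.le⟩
  have hTT : T ∈ Icc (0:ℝ) T := ⟨hT.le, le_refl _⟩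
  have hf₁C : ContDiffOn ℝ (k : ℕ) f₁ (Iic T) := by
    apply glueGen k 0 (Iic T) (Iic 0) (Icc 0 T) P₀ f hT.le
    · rw [Set.Iic_union_Icc_eq_Iic hT.le]
    · rw [Set.Iic_inter_Iic, min_eq_right hT.le]
    · rw [Set.inter_comm, Set.Ici_inter_Iic]
    · exact uniqueDiffOn_Iic T
    · exact uniqueDiffOn_Iic 0
    · exact uIcc
    · exact (hP₀s k).contDiffOn
    · exact hf
    · intro j hj
      rw [iteratedDerivWithin_eq_iteratedDeriv_of_contDiff hP₀s j (uniqueDiffOn_Iic 0)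
        self_mem_Iic, hP₀d j hj]
  have hf₁eq : EqOn f₁ f (Icc 0 T) := by
    intro t ht
    by_cases h : t ≤ 0
    · have ht0 : t = 0 := le_antisymm h ht.1
      subst ht0
      have := hP₀d 0 (Nat.zero_le _)
      simp only [iteratedDeriv_zero, iteratedDerivWithin_zero] at this
      simp [hf₁, this]
    · simp [hf₁, h]
  refine ⟨fun t => if t ≤ T then f₁ t else PT t, ?_, ?_⟩
  · rw [← contDiffOn_univ]
    apply glueGen k T univ (Iic T) (Ici T) f₁ PT (mem_univ T)
    · rw [Set.Iic_union_Ici]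
    · rw [Set.univ_inter]
    · rw [Set.univ_inter]
    · exact uniqueDiffOn_univ
    · exact uniqueDiffOn_Iic T
    · exact uniqueDiffOn_Ici T
    · exact hf₁C
    · exact (hPTs k).contDiffOn
    · intro j hj
      have hset : Iic T =ᶠ[nhds T] Icc 0 T := by
        filter_upwards [Ioi_mem_nhds hT] with x hx
        have : (x ∈ Iic T) = (x ∈ Icc 0 T) := by
          simp only [eq_iff_iff, mem_Iic, mem_Icc]
          exact ⟨fun h => ⟨(Set.mem_Ioi.1 hx).le, h⟩, fun h => h.2⟩
        exact this
      rw [iteratedDerivWithin_congr_set' hset j,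
        iteratedDerivWithin_congr hf₁eq hTT,
        iteratedDerivWithin_eq_iteratedDeriv_of_contDiff hPTs j (uniqueDiffOn_Ici T)
          self_mem_Ici, hPTd j hj]
  · intro t ht
    simp only [ht.2, if_pos]
    exact hf₁eq ht

lemma div_lemma (k : ℕ) (f : ℝ → ℝ) (hf : ContDiff ℝ ((k+1 : ℕ) : ℕ) f) (a : ℝ) (hfa : f a = 0) :
    ∃ g : ℝ → ℝ, ContDiff ℝ (k : ℕ) g ∧ ∀ t, f t = (t - a) * g t := by
  set G : ℕ → ℝ → ℝ :=
    fun j t => ∫ x in (0:ℝ)..1, x ^ j * iteratedDeriv (j+1) f (a + x * (t - a)) with hG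
  -- continuity of iterated derivatives
  have hFcont : ∀ j, j + 1 ≤ k + 1 → Continuous (iteratedDeriv (j+1) f) := fun j hj =>
    hf.continuous_iteratedDeriv (j+1) (by exact_mod_cast Nat.succ_le_succ (Nat.le_of_succ_le_succ hj))
  -- continuity of G j
  have hGcont : ∀ j, j + 1 ≤ k + 1 → Continuous (G j) := by
    intro j hj
    apply continuous_parametric_intervalIntegral_of_continuous'
      (f := fun t x => x ^ j * iteratedDeriv (j+1) f (a + x * (t - a))) (μ := volume)
    apply Continuous.mul
    · exact (continuous_snd.pow j)
    · exact (hFcont j hj).comp (by fun_prop)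
  -- differentiability of G j
  have hGd : ∀ j, j + 2 ≤ k + 1 → ∀ t₀ : ℝ, HasDerivAt (G j) (G (j+1) t₀) t₀ := by
    intro j hj t₀
    have hF1 : Continuous (iteratedDeriv (j+1) f) := hFcont j (le_trans (by omega) hj)
    have hF2 : Continuous (iteratedDeriv (j+2) f) := hFcont (j+1) hj
    have hF1diff : Differentiable ℝ (iteratedDeriv (j+1) f) :=
      hf.differentiable_iteratedDeriv (j+1) (by exact_mod_cast (by omega : j + 1 < k + 1))
    set R : ℝ := |t₀ - a| + 1 with hR
    obtain ⟨C, hC⟩ := (isCompact_Icc (a := a - R) (b := a + R)).exists_bound_of_continuousOn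
      hF2.continuousOn
    have hmem : ∀ x ∈ Set.uIoc (0:ℝ) 1, ∀ t ∈ Metric.ball t₀ 1, a + x * (t - a) ∈ Icc (a - R) (a + R) := by
      intro x hx t ht
      rw [Set.uIoc_of_le (by norm_num : (0:ℝ) ≤ 1)] at hx
      have hx0 : 0 < x := hx.1
      have hx1 : x ≤ 1 := hx.2
      have htt : |t - t₀| < 1 := by simpa [Real.dist_eq] using ht
      have : |x * (t - a)| ≤ R := by
        rw [abs_mul]
        have h1 : |t - a| ≤ |t - t₀| + |t₀ - a| := by
          calc |t - a| = |(t - t₀) + (t₀ - a)| := by ring_nf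
          _ ≤ |t - t₀| + |t₀ - a| := abs_add_le _ _
        have : |x| ≤ 1 := by rw [abs_of_pos hx0]; exact hx1
        calc |x| * |t - a| ≤ 1 * (|t - t₀| + |t₀ - a|) :=
          mul_le_mul this h1 (abs_nonneg _) zero_le_one
        _ ≤ R := by rw [one_mul, hR]; linarith
      have hb := abs_le.1 this
      rw [Set.mem_Icc]
      exact ⟨by linarith [hb.1], by linarith [hb.2]⟩
    have key := intervalIntegral.hasDerivAt_integral_of_dominated_loc_of_deriv_le
      (F := fun t x => x ^ j * iteratedDeriv (j+1) f (a + x * (t - a)))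
      (F' := fun t x => x ^ (j+1) * iteratedDeriv (j+2) f (a + x * (t - a)))
      (x₀ := t₀) (a := 0) (b := 1) (μ := volume) (bound := fun _ => C)
      (s := Metric.ball t₀ 1) (Metric.ball_mem_nhds t₀ one_pos)
      (Filter.Eventually.of_forall fun t =>
        ((continuous_id.pow j).mul (hF1.comp (by fun_prop))).aestronglyMeasurable)
      (((continuous_id.pow j).mul (hF1.comp (by fun_prop))).intervalIntegrable 0 1)
      (((continuous_id.pow (j+1)).mul (hF2.comp (by fun_prop))).aestronglyMeasurable)
      (Filter.Eventually.of_forall ?_) (intervalIntegrable_const)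
      (Filter.Eventually.of_forall ?_)
    · exact key.2
    · -- bound
      intro x hx t ht
      have hmem' := hmem x hx t ht
      rw [Set.uIoc_of_le (by norm_num : (0:ℝ) ≤ 1)] at hx
      have hx01 : |x| ≤ 1 := by rw [abs_of_pos hx.1]; exact hx.2
      have : ‖x ^ (j+1) * iteratedDeriv (j+2) f (a + x * (t - a))‖
          ≤ |x| ^ (j+1) * C := by
        rw [norm_mul, norm_pow]
        exact mul_le_mul_of_nonneg_left (hC _ hmem') (by positivity)
      refine le_trans this ?_
      have h2 : |x| ^ (j+1) ≤ 1 := pow_le_one₀ (abs_nonneg x) hx01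
      have hR0 : (0:ℝ) ≤ R := by rw [hR]; linarith [abs_nonneg (t₀ - a)]
      have hC0 : 0 ≤ C := le_trans (norm_nonneg _) (hC a ⟨by linarith, by linarith⟩)
      calc |x| ^ (j+1) * C ≤ 1 * C := mul_le_mul_of_nonneg_right h2 hC0
        _ = C := one_mul C
    · -- differentiability in t
      intro x _ t _
      have inner : HasDerivAt (fun t : ℝ => a + x * (t - a)) x t := by
        simpa using (((hasDerivAt_id t).sub_const a).const_mul x).const_add a
      have outer : HasDerivAt (iteratedDeriv (j+1) f)
          (iteratedDeriv (j+2) f (a + x * (t - a))) (a + x * (t - a)) := by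
        have := (hF1diff (a + x * (t - a))).hasDerivAt
        rwa [show deriv (iteratedDeriv (j+1) f) (a + x * (t - a))
          = iteratedDeriv (j+2) f (a + x * (t - a)) by rw [← iteratedDeriv_succ]] at this
      have := (outer.comp t inner).const_mul (x ^ j)
      exact this.congr_deriv (by ring)
  -- G j is C^d whenever j + d ≤ k
  have hGsmooth : ∀ d j : ℕ, j + d ≤ k → ContDiff ℝ (d : ℕ) (G j) := by
    intro d
    induction d with
    | zero => intro j hj; exact contDiff_zero.2 (hGcont j (by omega))
    | succ d IH =>
      intro j hj
      rw [show ((d+1 : ℕ) : WithTop ℕ∞) = (d : ℕ) + 1 by push_cast; ring,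
        contDiff_succ_iff_deriv]
      refine ⟨fun t => (hGd j (by omega) t).differentiableAt, by simp, ?_⟩
      have : deriv (G j) = G (j+1) := funext fun t => (hGd j (by omega) t).deriv
      rw [this]
      exact IH (j+1) (by omega)
  refine ⟨G 0, hGsmooth k 0 (by omega), ?_⟩
  intro t
  have hF1 : Continuous (iteratedDeriv 1 f) := hFcont 0 (by omega)
  have hderiv : ∀ x ∈ Set.uIcc (0:ℝ) 1,
      HasDerivAt (fun x : ℝ => f (a + x * (t - a)))
        ((t - a) * iteratedDeriv 1 f (a + x * (t - a))) x := by
    intro x _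
    have inner : HasDerivAt (fun x : ℝ => a + x * (t - a)) (t - a) x := by
      simpa using ((hasDerivAt_id x).mul_const (t - a)).const_add a
    have outer : HasDerivAt f (iteratedDeriv 1 f (a + x * (t - a))) (a + x * (t - a)) := by
      have hfd : Differentiable ℝ f := hf.differentiable (by exact_mod_cast Nat.succ_ne_zero k)
      have := (hfd (a + x * (t - a))).hasDerivAt
      rwa [show deriv f (a + x * (t - a)) = iteratedDeriv 1 f (a + x * (t - a)) by
        rw [iteratedDeriv_one]] at this
    have := outer.comp x inner
    exact this.congr_deriv (by ring)
  have hint : IntervalIntegrable (fun x : ℝ => (t - a) * iteratedDeriv 1 f (a + x * (t - a)))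
      MeasureTheory.volume 0 1 :=
    (continuous_const.mul (hF1.comp (by fun_prop))).intervalIntegrable 0 1
  have := intervalIntegral.integral_eq_sub_of_hasDerivAt hderiv hint
  have key : (t - a) * (∫ x in (0:ℝ)..1, iteratedDeriv 1 f (a + x * (t - a))) = f t := by
    rw [← intervalIntegral.integral_const_mul, this]
    have e1 : a + 1 * (t - a) = t := by ring
    have e0 : a + 0 * (t - a) = a := by ring
    rw [e1, e0, hfa, sub_zero]
  rw [← key, hG]
  norm_num

lemma main_aux : ∀ (n k : ℕ) (f : ℝ → ℝ), ContDiff ℝ ((k + n : ℕ) : ℕ) f →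
    ∀ (a : Fin n → ℝ), Function.Injective a → (∀ i, f (a i) = 0) →
    ∃ ζ : ℝ → ℝ, ContDiff ℝ (k : ℕ) ζ ∧ ∀ t, f t = ζ t * ∏ i, (t - a i) := by
  intro n
  induction n with
  | zero =>
    intro k f hf a _ _
    exact ⟨f, by simpa using hf, fun t => by simp⟩
  | succ n IH =>
    intro k f hf a ha hz
    set c := a (Fin.last n) with hc
    obtain ⟨g, hg, hfg⟩ := div_lemma (k + n) f
      (by rw [show k + n + 1 = k + (n + 1) by omega]; exact hf) c (hz (Fin.last n))
    have hgz : ∀ i : Fin n, g (a i.castSucc) = 0 := by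
      intro i
      have hne : a i.castSucc ≠ c := by
        intro h
        exact absurd (ha h) (Fin.ne_of_lt (Fin.castSucc_lt_last i))
      have := hfg (a i.castSucc)
      rw [hz i.castSucc] at this
      rcases mul_eq_zero.1 this.symm with h | h
      · exact absurd (sub_eq_zero.1 h) hne
      · exact h
    obtain ⟨ζ, hζ, hζeq⟩ := IH k g hg (fun i => a i.castSucc)
      (fun i j hij => Fin.castSucc_injective n (ha hij)) hgz
    refine ⟨ζ, hζ, fun t => ?_⟩
    rw [hfg t, hζeq t, Fin.prod_univ_castSucc]
    ring


theorem stmt_11 (m n : ℕ) (T : ℝ) (hT : 0 < T) (a : Fin n → ℝ)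
    (ha : Function.Injective a) (haT : ∀ i, a i ∈ Set.Icc (0 : ℝ) T)
    (f : ℝ → ℝ) (hf : ContDiffOn ℝ (m + n : ℕ) f (Set.Icc 0 T))
    (hz : ∀ i, f (a i) = 0) :
    ∃ ζ : ℝ → ℝ, ContDiffOn ℝ (m : ℕ) ζ (Set.Icc 0 T) ∧
      ∀ t ∈ Set.Icc (0 : ℝ) T, f t = ζ t * ∏ i, (t - a i) := by
  obtain ⟨F, hF, hFeq⟩ := extension hT hf
  obtain ⟨ζ, hζ, hζeq⟩ := main_aux n m F hF a ha (fun i => by rw [hFeq (haT i)]; exact hz i)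
  exact ⟨ζ, hζ.contDiffOn, fun t ht => by rw [← hFeq ht, hζeq t]⟩
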